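/- A ring R is semisimple if and only if every left R-module is quasi injective. -/

import Mathlib

universe u v w

/-- The annihilator of an element `a` of a left `R`-module, as a left ideal of `R`. -/
def annihilatorOf (R : Type u) [Ring R] {A : Type v} [AddCommGroup A] [Module R A] (a : A) :
    Submodule R R := LinearMap.ker (LinearMap.toSpanSingleton R A a)

/-- `J` belongs to the filter `Ω̄(A)` of left ideals generated by annihilators of elements of
`A`, i.e. `J` contains a finite intersection of annihilators of elements of `A`. -/
def MemOmegaBar (R : Type u) [Ring R] (A : Type v) [AddCommGroup A] [Module R A]
    (J : Submodule R R) : Prop :=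
  ∃ s : Finset A, (⨅ a ∈ s, annihilatorOf R a) ≤ J

/-- `A` is a self pure submodule of `B` (along the injection `i`): every map `f : L → A` from a
finitely generated left ideal with `ker f ∈ Ω̄(A)` which extends to a map `R → B` also extends
to a map `R → A`. -/
def IsSelfPureIn (R : Type u) [Ring R] {A : Type v} {B : Type w} [AddCommGroup A] [Module R A]
    [AddCommGroup B] [Module R B] (i : A →ₗ[R] B) : Prop :=
  ∀ L : Submodule R R, L.FG → ∀ f : L →ₗ[R] A,
    MemOmegaBar R A ((LinearMap.ker f).map L.subtype) →
    (∃ g : R →ₗ[R] B, ∀ x : L, g x = i (f x)) →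
    ∃ h : R →ₗ[R] A, ∀ x : L, h x = f x

/-- `A` is absolutely self pure: every map `f : L → A` from a finitely generated left ideal of
`R` with `ker f ∈ Ω̄(A)` extends to a map `R → A`. -/
def AbsolutelySelfPure (R : Type u) [Ring R] (A : Type v) [AddCommGroup A] [Module R A] : Prop :=
  ∀ L : Submodule R R, L.FG → ∀ f : L →ₗ[R] A,
    MemOmegaBar R A ((LinearMap.ker f).map L.subtype) →
    ∃ h : R →ₗ[R] A, ∀ x : L, h x = f x

/-- `Q` is quasi injective: every homomorphism from a submodule of `Q` into `Q` extends to an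
endomorphism of `Q`. -/
def IsQuasiInjective (R : Type u) [Ring R] (Q : Type v) [AddCommGroup Q] [Module R Q] : Prop :=
  ∀ (N : Submodule R Q) (f : N →ₗ[R] Q), ∃ g : Q →ₗ[R] Q, ∀ x : N, g x = f x

/-- `A` is a pure submodule of `B` (along `i`): for every finitely generated submodule `K` of a
finite free module and every commuting square, a map `F → A` makes the upper triangle commute. -/
def IsPureIn (R : Type u) [Ring R] {A : Type v} {B : Type w} [AddCommGroup A] [Module R A]
    [AddCommGroup B] [Module R B] (i : A →ₗ[R] B) : Prop :=
  ∀ (n : ℕ) (K : Submodule R (Fin n → R)), K.FG →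
    ∀ (f : K →ₗ[R] A) (g : (Fin n → R) →ₗ[R] B),
      (∀ x : K, g x = i (f x)) →
      ∃ h : (Fin n → R) →ₗ[R] A, ∀ x : K, h x = f x

/-- `A` is absolutely pure: every map into `A` from a finitely generated submodule of a finite
free module extends to the free module. -/
def IsAbsolutelyPure (R : Type u) [Ring R] (A : Type v) [AddCommGroup A] [Module R A] : Prop :=
  ∀ (n : ℕ) (K : Submodule R (Fin n → R)), K.FG →
    ∀ f : K →ₗ[R] A, ∃ g : (Fin n → R) →ₗ[R] A, ∀ x : K, g x = f x

theorem semisimple_iff_all_quasiInjective (R : Type u) [Ring R] :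
    IsSemisimpleRing R ↔
      (∀ (M : Type u) [AddCommGroup M] [Module R M], IsQuasiInjective R M) := by
  constructor
  · intro _ M _ _ N f
    obtain ⟨P, hP⟩ := exists_isCompl N
    exact ⟨f ∘ₗ N.projectionOnto P hP, fun x => by
      rw [LinearMap.comp_apply, Submodule.projectionOnto_apply_left]⟩
  · intro hq
    refine { toComplementedLattice := ⟨?_⟩ }
    intro I
    set N : Submodule R (R × I) := I.prod ⊥ with hN
    let f : N →ₗ[R] R × I :=
      { toFun := fun p => (0, ⟨p.1.1, p.2.1⟩)
        map_add' := fun p q => by ext <;> simp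
        map_smul' := fun r p => by ext <;> simp }
    obtain ⟨g, hg⟩ := hq (R × I) N f
    set r : R →ₗ[R] I := (LinearMap.snd R R I) ∘ₗ g ∘ₗ (LinearMap.inl R R I) with hr
    have hrx : ∀ x ∈ I, (r x : R) = x := by
      intro x hx
      have hmem : ((x, (0 : I)) : R × I) ∈ N := by simp [hN, hx]
      have := hg ⟨(x, 0), hmem⟩
      simp only [hr, LinearMap.comp_apply, LinearMap.inl_apply, LinearMap.snd_apply]
      rw [show ((x, (0:I)) : R × I) = (⟨(x,0), hmem⟩ : N) from rfl, this]
      rfl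
    set p : R →ₗ[R] R := I.subtype ∘ₗ r with hp
    have hpI : ∀ x, p x ∈ I := fun x => (r x).2
    have hpx : ∀ x ∈ I, p x = x := fun x hx => hrx x hx
    refine ⟨LinearMap.ker p, ?_, ?_⟩
    · rw [disjoint_iff, eq_bot_iff]
      intro x hx
      obtain ⟨hx1, hx2⟩ := Submodule.mem_inf.mp hx
      have : p x = 0 := hx2
      rw [hpx x hx1] at this
      simpa using this
    · rw [codisjoint_iff, eq_top_iff]
      intro x _
      rw [Submodule.mem_sup]
      refine ⟨p x, hpI x, x - p x, ?_, by abel⟩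
      simp only [LinearMap.mem_ker, map_sub]
      rw [hpx (p x) (hpI x), sub_self]
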